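/- Let B, C⁻, C⁺ > 0 with C⁻ ≤ C⁺, let v ∈ L²(ℝ) with ‖v‖_{L²} ≤ B, let ξ : ℝ → ℝ be measurable with C⁻ ≤ ξ ≤ C⁺ a.e., and let u ∈ L²(ℝ) ∩ L^∞(ℝ). Set g(z) = min{1, e^{(C⁻/2)(B²/2 − |z|)}} with ‖g‖_{L¹} = B² + 4/C⁻. Define P(Y) = (1/2)∫_ℝ exp(−|∫_Y^{Y'} cos²(v(s)/2) ξ(s) ds|)·[u²(Y')cos²(v(Y')/2) + (1/2)sin²(v(Y')/2)]·ξ(Y') dY' and P_x(Y) = (1/2)(∫_Y^{+∞} − ∫_{−∞}^{Y}) of the same integrand. Then ‖P‖_{L²} ≤ (C⁺/2)·‖g‖_{L¹}·(‖u‖_{L^∞}‖u‖_{L²} + (1/4)‖v‖_{L²}) and ‖P_x‖_{L²} ≤ C⁺·‖g‖_{L¹}·(‖u‖_{L^∞}‖u‖_{L²} + (1/4)‖v‖_{L²}). -/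

import Mathlib

open MeasureTheory Real
open scoped ENNReal NNReal

noncomputable section
set_option maxHeartbeats 1000000

lemma aux_g_lintegral (c R : ℝ) (hc : 0 < c) (hR : 0 ≤ R) :
    ∫⁻ z : ℝ, ENNReal.ofReal (min 1 (Real.exp (c * (R - |z|))))
      ≤ ENNReal.ofReal (2 * R + 2 / c) := by
  set w : ℝ → ℝ := (Set.Ioi R).indicator (fun t => Real.exp (c * (R - t))) with hw
  have hwnn : ∀ t, 0 ≤ w t := by
    intro t
    exact Set.indicator_nonneg (fun x _ => (Real.exp_pos _).le) t
  have hwm : Measurable w :=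
    (Real.continuous_exp.comp (continuous_const.mul
      (continuous_const.sub continuous_id))).measurable.indicator measurableSet_Ioi
  have hexpeq : ∀ t : ℝ, Real.exp (c * (R - t)) = Real.exp (c * R) * Real.exp (-c * t) := by
    intro t; rw [← Real.exp_add]; ring_nf
  have hwint : Integrable w volume := by
    rw [hw, integrable_indicator_iff measurableSet_Ioi]
    have h0 : IntegrableOn (fun t : ℝ => Real.exp (c * R) * Real.exp (-c * t))
        (Set.Ioi R) volume := (exp_neg_integrableOn_Ioi R hc).const_mul _
    exact h0.congr_fun (fun t _ => (hexpeq t).symm) measurableSet_Ioi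
  have hwval : ∫ t, w t = 1 / c := by
    rw [hw, integral_indicator measurableSet_Ioi]
    calc ∫ t in Set.Ioi R, Real.exp (c * (R - t))
        = ∫ t in Set.Ioi R, Real.exp (c * R) * Real.exp (-c * t) := by
          simp_rw [hexpeq]
      _ = Real.exp (c * R) * ∫ t in Set.Ioi R, Real.exp (-c * t) := by
          rw [integral_const_mul]
      _ = Real.exp (c * R) * (c⁻¹ • ∫ t in Set.Ioi (c * R), Real.exp (-t)) := by
          simp_rw [neg_mul]
          rw [integral_comp_mul_left_Ioi (fun t => Real.exp (-t)) R hc]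
      _ = 1 / c := by
          rw [integral_exp_neg_Ioi, smul_eq_mul, ← mul_assoc, mul_comm (Real.exp (c*R)) c⁻¹,
            mul_assoc, ← Real.exp_add]
          simp [one_div]
  have hpt : ∀ z : ℝ, ENNReal.ofReal (min 1 (Real.exp (c * (R - |z|))))
      ≤ (Set.Icc (-R) R).indicator (fun _ => (1 : ℝ≥0∞)) z
        + ENNReal.ofReal (w z + w (-z)) := by
    intro z
    rcases le_or_gt |z| R with h | h
    · refine le_trans ?_ le_self_add
      have hz : z ∈ Set.Icc (-R) R := by
        rcases abs_le.mp h with ⟨h1, h2⟩; exact ⟨h1, h2⟩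
      rw [Set.indicator_of_mem hz]
      calc ENNReal.ofReal (min 1 (Real.exp (c * (R - |z|))))
          ≤ ENNReal.ofReal 1 := ENNReal.ofReal_le_ofReal (min_le_left _ _)
        _ = 1 := ENNReal.ofReal_one
    · refine le_trans ?_ le_add_self
      apply ENNReal.ofReal_le_ofReal
      refine (min_le_right _ _).trans (le_of_eq ?_)
      rcases le_or_gt 0 z with hz | hz
      · have hz1 : |z| = z := abs_of_nonneg hz
        have hz2 : z ∈ Set.Ioi R := by rw [← hz1]; exact h
        have hz3 : -z ∉ Set.Ioi R := by
          simp only [Set.mem_Ioi, not_lt]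
          linarith [abs_nonneg z, hz1 ▸ h]
        rw [hw]
        rw [Set.indicator_of_mem hz2, Set.indicator_of_notMem hz3, hz1, add_zero]
      · have hz1 : |z| = -z := abs_of_neg hz
        have hz2 : -z ∈ Set.Ioi R := by rw [← hz1]; exact h
        have hz3 : z ∉ Set.Ioi R := by
          simp only [Set.mem_Ioi, not_lt]; linarith
        rw [hw]
        rw [Set.indicator_of_mem hz2, Set.indicator_of_notMem hz3, hz1, zero_add]
  calc ∫⁻ z : ℝ, ENNReal.ofReal (min 1 (Real.exp (c * (R - |z|))))
      ≤ ∫⁻ z : ℝ, ((Set.Icc (-R) R).indicator (fun _ => (1 : ℝ≥0∞)) z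
          + ENNReal.ofReal (w z + w (-z))) := lintegral_mono hpt
    _ = (∫⁻ z : ℝ, (Set.Icc (-R) R).indicator (fun _ => (1 : ℝ≥0∞)) z)
          + ∫⁻ z : ℝ, ENNReal.ofReal (w z + w (-z)) := by
        refine lintegral_add_left ((measurable_one).indicator measurableSet_Icc) _
    _ ≤ ENNReal.ofReal (2 * R) + ENNReal.ofReal (2 / c) := by
        gcongr
        · rw [lintegral_indicator measurableSet_Icc, setLIntegral_one, Real.volume_Icc]
          apply le_of_eq; congr 1; ring
        · have hsplit : ∀ z : ℝ, ENNReal.ofReal (w z + w (-z))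
              = ENNReal.ofReal (w z) + ENNReal.ofReal (w (-z)) := fun z =>
            ENNReal.ofReal_add (hwnn z) (hwnn (-z))
          simp_rw [hsplit]
          rw [lintegral_add_left (hwm.ennreal_ofReal)]
          have hneg : ∫⁻ z : ℝ, ENNReal.ofReal (w (-z)) = ∫⁻ z : ℝ, ENNReal.ofReal (w z) :=
            (Measure.measurePreserving_neg (volume : Measure ℝ)).lintegral_comp
              hwm.ennreal_ofReal
          rw [hneg, ← ofReal_integral_eq_lintegral_ofReal hwint
            (Filter.Eventually.of_forall hwnn), hwval, ← ENNReal.ofReal_add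
            (by positivity) (by positivity)]
          apply ENNReal.ofReal_le_ofReal
          rw [div_eq_mul_inv 2 c, one_div]
          ring_nf
          apply le_of_eq; ring
    _ ≤ ENNReal.ofReal (2 * R + 2 / c) := by
        rw [← ENNReal.ofReal_add (by positivity) (by positivity)]

lemma aux_core (B Cm Cp : ℝ) (hCm : 0 < Cm) (v ξ : ℝ → ℝ)
    (hvm : AEStronglyMeasurable v (volume : Measure ℝ)) (hξm : Measurable ξ)
    (hξ : ∀ᵐ s : ℝ, ξ s ∈ Set.Icc Cm Cp)
    (hv2 : Integrable (fun s => (v s) ^ 2) (volume : Measure ℝ))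
    (hvB : ∫ s : ℝ, (v s) ^ 2 ≤ B ^ 2) {a b : ℝ} (hab : a ≤ b) :
    Cm * ((b - a) - B ^ 2 / 4) ≤ ∫ s in a..b, Real.cos (v s / 2) ^ 2 * ξ s := by
  rw [intervalIntegral.integral_of_le hab]
  set μr : Measure ℝ := volume.restrict (Set.Ioc a b) with hμr
  have hfin : volume (Set.Ioc a b) < ⊤ := by
    rw [Real.volume_Ioc]; exact ENNReal.ofReal_lt_top
  have hmv : AEMeasurable v μr := hvm.aemeasurable.restrict
  have hcosm : AEMeasurable (fun s => Real.cos (v s / 2) ^ 2) μr := by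
    exact (((Real.continuous_cos.comp (continuous_id.div_const 2)).measurable).comp_aemeasurable hmv).pow_const 2
  have hsinm : AEMeasurable (fun s => Real.sin (v s / 2) ^ 2) μr := by
    exact (((Real.continuous_sin.comp (continuous_id.div_const 2)).measurable).comp_aemeasurable hmv).pow_const 2
  have hconst : ∀ C : ℝ, Integrable (fun _ => C) μr := by
    intro C
    rw [hμr]
    exact integrableOn_const hfin.ne
  have hξae : ∀ᵐ s ∂μr, ξ s ∈ Set.Icc Cm Cp := ae_restrict_of_ae hξ
  have hCp : 0 < Cp := by
    obtain ⟨s, hs⟩ := hξ.exists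
    linarith [hs.1, hs.2]
  have hc : Integrable (fun s => Real.cos (v s / 2) ^ 2) μr := by
    refine Integrable.mono' (hconst 1) hcosm.aestronglyMeasurable ?_
    filter_upwards with s
    rw [Real.norm_eq_abs, abs_of_nonneg (sq_nonneg _)]
    exact Real.cos_sq_le_one _
  have hd : Integrable (fun s => Real.sin (v s / 2) ^ 2) μr := by
    refine Integrable.mono' (hconst 1) hsinm.aestronglyMeasurable ?_
    filter_upwards with s
    rw [Real.norm_eq_abs, abs_of_nonneg (sq_nonneg _)]
    exact Real.sin_sq_le_one _
  have ha : Integrable (fun s => Real.cos (v s / 2) ^ 2 * ξ s) μr := by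
    refine Integrable.mono' (hconst Cp) (hcosm.aestronglyMeasurable.mul
      (hξm.aestronglyMeasurable.restrict)) ?_
    filter_upwards [hξae] with s hs
    rw [Real.norm_eq_abs, abs_mul, abs_of_nonneg (sq_nonneg _),
      abs_of_nonneg (le_trans hCm.le hs.1)]
    calc Real.cos (v s / 2) ^ 2 * ξ s ≤ 1 * ξ s :=
          mul_le_mul_of_nonneg_right (Real.cos_sq_le_one _) (le_trans hCm.le hs.1)
      _ ≤ Cp := by rw [one_mul]; exact hs.2
  have he : Integrable (fun s => (v s) ^ 2) μr := hv2.restrict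
  -- step 1 : Cm * cos² ≤ cos² ξ pointwise a.e.
  have step1 : ∫ s, Cm * Real.cos (v s / 2) ^ 2 ∂μr
      ≤ ∫ s, Real.cos (v s / 2) ^ 2 * ξ s ∂μr := by
    refine integral_mono_ae (hc.const_mul Cm) ha ?_
    filter_upwards [hξae] with s hs
    calc Cm * Real.cos (v s / 2) ^ 2 ≤ ξ s * Real.cos (v s / 2) ^ 2 :=
          mul_le_mul_of_nonneg_right hs.1 (sq_nonneg _)
      _ = Real.cos (v s / 2) ^ 2 * ξ s := mul_comm _ _
  -- step 2 : ∫ cos² = (b - a) - ∫ sin²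
  have step2 : ∫ s, Real.cos (v s / 2) ^ 2 ∂μr
      = (b - a) - ∫ s, Real.sin (v s / 2) ^ 2 ∂μr := by
    have h1 : ∀ s : ℝ, Real.cos (v s / 2) ^ 2 = 1 - Real.sin (v s / 2) ^ 2 := fun s =>
      Real.cos_sq' _
    simp_rw [h1]
    rw [integral_sub (hconst 1) hd]
    congr 1
    rw [integral_const, hμr, measureReal_restrict_apply_univ, Measure.real, Real.volume_Ioc, smul_eq_mul, mul_one,
      ENNReal.toReal_ofReal (by linarith)]
  -- step 3 : ∫ sin² ≤ B^2/4
  have step3 : ∫ s, Real.sin (v s / 2) ^ 2 ∂μr ≤ B ^ 2 / 4 := by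
    have h1 : ∫ s, Real.sin (v s / 2) ^ 2 ∂μr ≤ ∫ s, (v s) ^ 2 / 4 ∂μr := by
      refine integral_mono_ae hd (he.div_const 4) ?_
      filter_upwards with s
      have h2 : Real.sin (v s / 2) ^ 2 ≤ (v s / 2) ^ 2 := Real.sin_sq_le_sq
      calc Real.sin (v s / 2) ^ 2 ≤ (v s / 2) ^ 2 := h2
        _ = (v s) ^ 2 / 4 := by ring
    have h2 : ∫ s, (v s) ^ 2 / 4 ∂μr ≤ ∫ s : ℝ, (v s) ^ 2 / 4 := by
      rw [hμr]
      refine setIntegral_le_integral (hv2.div_const 4) ?_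
      filter_upwards with s
      positivity
    have h3 : ∫ s : ℝ, (v s) ^ 2 / 4 = (∫ s : ℝ, (v s) ^ 2) / 4 := by
      rw [integral_div]
    linarith
  have hcos_lb : (b - a) - B ^ 2 / 4 ≤ ∫ s, Real.cos (v s / 2) ^ 2 ∂μr := by
    rw [step2]; linarith
  calc Cm * ((b - a) - B ^ 2 / 4) ≤ Cm * ∫ s, Real.cos (v s / 2) ^ 2 ∂μr :=
        mul_le_mul_of_nonneg_left hcos_lb hCm.le
    _ = ∫ s, Cm * Real.cos (v s / 2) ^ 2 ∂μr := (integral_const_mul Cm _).symm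
    _ ≤ _ := step1

lemma aux_kernel (B Cm Cp : ℝ) (hCm : 0 < Cm) (v ξ : ℝ → ℝ)
    (hvm : AEStronglyMeasurable v (volume : Measure ℝ)) (hξm : Measurable ξ)
    (hξ : ∀ᵐ s : ℝ, ξ s ∈ Set.Icc Cm Cp)
    (hv2 : Integrable (fun s => (v s) ^ 2) (volume : Measure ℝ))
    (hvB : ∫ s : ℝ, (v s) ^ 2 ≤ B ^ 2) (Y Y' : ℝ) :
    Real.exp (-|∫ s in Y..Y', Real.cos (v s / 2) ^ 2 * ξ s|)
      ≤ min 1 (Real.exp ((Cm / 2) * (B ^ 2 / 2 - |Y - Y'|))) := by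
  have key : (Cm / 2) * (|Y - Y'| - B ^ 2 / 2) ≤ |∫ s in Y..Y', Real.cos (v s / 2) ^ 2 * ξ s| := by
    rcases le_total (|Y - Y'|) (B ^ 2 / 2) with h | h
    · have : (Cm / 2) * (|Y - Y'| - B ^ 2 / 2) ≤ 0 := by
        apply mul_nonpos_of_nonneg_of_nonpos (by positivity)
        linarith
      exact this.trans (abs_nonneg _)
    · rcases le_total Y Y' with hYY | hYY
      · have hcore := aux_core B Cm Cp hCm v ξ hvm hξm hξ hv2 hvB hYY
        have habs : |Y - Y'| = Y' - Y := by
          rw [abs_sub_comm]; exact abs_of_nonneg (by linarith)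
        have h2 : (Cm / 2) * (|Y - Y'| - B ^ 2 / 2) ≤ Cm * ((Y' - Y) - B ^ 2 / 4) := by
          rw [habs]
          nlinarith [abs_nonneg (Y - Y'), habs]
        exact h2.trans (hcore.trans (le_abs_self _))
      · have hcore := aux_core B Cm Cp hCm v ξ hvm hξm hξ hv2 hvB hYY
        have hsymm : ∫ s in Y..Y', Real.cos (v s / 2) ^ 2 * ξ s
            = -∫ s in Y'..Y, Real.cos (v s / 2) ^ 2 * ξ s :=
          intervalIntegral.integral_symm _ _
        have habs : |Y - Y'| = Y - Y' := abs_of_nonneg (by linarith)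
        have h2 : (Cm / 2) * (|Y - Y'| - B ^ 2 / 2) ≤ Cm * ((Y - Y') - B ^ 2 / 4) := by
          rw [habs]; nlinarith
        rw [hsymm, abs_neg]
        exact h2.trans (hcore.trans (le_abs_self _))
  apply le_min
  · exact Real.exp_le_one_iff.mpr (neg_nonpos.mpr (abs_nonneg _))
  · apply Real.exp_le_exp.mpr
    nlinarith [key]

lemma aux_mp_sub_left (Y : ℝ) : MeasurePreserving (fun t : ℝ => Y - t) volume volume := by
  have h := (measurePreserving_add_left (volume : Measure ℝ) Y).comp
    (Measure.measurePreserving_neg (volume : Measure ℝ))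
  simpa [Function.comp_def, sub_eq_add_neg] using h

lemma aux_young (g h : ℝ → ℝ≥0∞) (hg : Measurable g) (hh : AEMeasurable h (volume : Measure ℝ)) :
    ∫⁻ Y : ℝ, (∫⁻ Y' : ℝ, g (Y - Y') * h Y') ^ (2 : ℝ)
      ≤ (∫⁻ z : ℝ, g z) ^ (2 : ℝ) * ∫⁻ y : ℝ, (h y) ^ (2 : ℝ) := by
  set G := ∫⁻ z : ℝ, g z with hG
  set H := ∫⁻ y : ℝ, (h y) ^ (2 : ℝ) with hH
  -- pointwise Cauchy–Schwarz
  have hstep : ∀ Y : ℝ, (∫⁻ Y' : ℝ, g (Y - Y') * h Y') ^ (2 : ℝ)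
      ≤ G * ∫⁻ Y' : ℝ, g (Y - Y') * (h Y') ^ (2 : ℝ) := by
    intro Y
    have hconj : Real.HolderConjugate 2 2 := Real.HolderConjugate.two_two
    have hgY : Measurable fun Y' : ℝ => g (Y - Y') :=
      hg.comp (measurable_const.sub measurable_id)
    have hf1 : AEMeasurable (fun Y' : ℝ => (g (Y - Y')) ^ (1 / 2 : ℝ)) volume :=
      (hgY.pow_const _).aemeasurable
    have hf2 : AEMeasurable (fun Y' : ℝ => (g (Y - Y')) ^ (1 / 2 : ℝ) * h Y') volume :=
      hf1.mul hh
    have key := ENNReal.lintegral_mul_le_Lp_mul_Lq volume hconj hf1 hf2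
    have e1 : ∀ Y' : ℝ, (g (Y - Y')) ^ (1 / 2 : ℝ) * ((g (Y - Y')) ^ (1 / 2 : ℝ) * h Y')
        = g (Y - Y') * h Y' := by
      intro Y'
      rw [← mul_assoc, ← ENNReal.rpow_add_of_nonneg _ _ (by norm_num) (by norm_num)]
      norm_num
    have e2 : ∀ Y' : ℝ, ((g (Y - Y')) ^ (1 / 2 : ℝ)) ^ (2 : ℝ) = g (Y - Y') := by
      intro Y'
      rw [← ENNReal.rpow_mul]
      norm_num
    have e3 : ∀ Y' : ℝ, ((g (Y - Y')) ^ (1 / 2 : ℝ) * h Y') ^ (2 : ℝ)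
        = g (Y - Y') * (h Y') ^ (2 : ℝ) := by
      intro Y'
      rw [ENNReal.mul_rpow_of_nonneg _ _ (by norm_num : (0:ℝ) ≤ 2), ← ENNReal.rpow_mul]
      norm_num
    simp only [Pi.mul_apply] at key
    simp_rw [e1, e2, e3] at key
    have hGY : ∫⁻ Y' : ℝ, g (Y - Y') = G := (aux_mp_sub_left Y).lintegral_comp hg
    rw [hGY] at key
    calc (∫⁻ Y' : ℝ, g (Y - Y') * h Y') ^ (2 : ℝ)
        ≤ (G ^ (1 / 2 : ℝ) * (∫⁻ Y' : ℝ, g (Y - Y') * (h Y') ^ (2 : ℝ)) ^ (1 / 2 : ℝ)) ^ (2 : ℝ) :=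
          ENNReal.rpow_le_rpow key (by norm_num)
      _ = G * ∫⁻ Y' : ℝ, g (Y - Y') * (h Y') ^ (2 : ℝ) := by
          rw [ENNReal.mul_rpow_of_nonneg _ _ (by norm_num : (0:ℝ) ≤ 2), ← ENNReal.rpow_mul,
            ← ENNReal.rpow_mul]
          norm_num
  rcases eq_or_ne G ⊤ with hGtop | hGtop
  · rcases eq_or_ne H 0 with hH0 | hH0
    · -- h = 0 a.e., LHS = 0
      have hh0 : ∀ᵐ y : ℝ ∂volume, h y = 0 := by
        have h2 := (lintegral_eq_zero_iff' (hh.pow_const (2:ℝ))).mp hH0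
        filter_upwards [h2] with y hy
        rcases ENNReal.rpow_eq_zero_iff.mp hy with ⟨h0, _⟩ | ⟨_, hneg⟩
        · exact h0
        · norm_num at hneg
      have hzero : ∀ Y : ℝ, (∫⁻ Y' : ℝ, g (Y - Y') * h Y') = 0 := by
        intro Y
        have hgY : Measurable fun Y' : ℝ => g (Y - Y') :=
          hg.comp (measurable_const.sub measurable_id)
        rw [lintegral_eq_zero_iff' (f := fun Y' => g (Y - Y') * h Y') (hgY.aemeasurable.mul hh)]
        filter_upwards [hh0] with y hy
        simp [hy]
      simp only [hzero]
      simp [ENNReal.zero_rpow_of_pos (by norm_num : (0:ℝ) < 2)]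
    · have : (G : ℝ≥0∞) ^ (2:ℝ) * H = ⊤ := by
        rw [hGtop, ENNReal.top_rpow_of_pos (by norm_num)]
        exact ENNReal.top_mul hH0
      rw [this]
      exact le_top
  · calc ∫⁻ Y : ℝ, (∫⁻ Y' : ℝ, g (Y - Y') * h Y') ^ (2 : ℝ)
        ≤ ∫⁻ Y : ℝ, G * ∫⁻ Y' : ℝ, g (Y - Y') * (h Y') ^ (2 : ℝ) := lintegral_mono hstep
      _ = G * ∫⁻ Y : ℝ, ∫⁻ Y' : ℝ, g (Y - Y') * (h Y') ^ (2 : ℝ) :=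
          lintegral_const_mul' G _ hGtop
      _ = G * ∫⁻ Y' : ℝ, ∫⁻ Y : ℝ, g (Y - Y') * (h Y') ^ (2 : ℝ) := by
          congr 1
          refine lintegral_lintegral_swap ?_
          have m1 : Measurable fun p : ℝ × ℝ => g (p.1 - p.2) :=
            hg.comp (measurable_fst.sub measurable_snd)
          have m2 : AEMeasurable (fun p : ℝ × ℝ => (h p.2) ^ (2:ℝ))
              ((volume : Measure ℝ).prod (volume : Measure ℝ)) :=
            (hh.pow_const (2:ℝ)).comp_quasiMeasurePreserving
              Measure.quasiMeasurePreserving_snd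
          exact m1.aemeasurable.mul m2
      _ = G * ∫⁻ Y' : ℝ, (∫⁻ Y : ℝ, g (Y - Y')) * (h Y') ^ (2 : ℝ) := by
          congr 1
          refine lintegral_congr fun Y' => ?_
          exact lintegral_mul_const _ (hg.comp (measurable_id.sub measurable_const))
      _ = G * ∫⁻ Y' : ℝ, G * (h Y') ^ (2 : ℝ) := by
          congr 1
          refine lintegral_congr fun Y' => ?_
          rw [(measurePreserving_sub_right (volume : Measure ℝ) Y').lintegral_comp hg, mul_comm]
      _ = G * (G * H) := by rw [lintegral_const_mul' G _ hGtop]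
      _ = G ^ (2 : ℝ) * H := by
          have h2 : G ^ (2 : ℝ) = G * G := by
            rw [show (2:ℝ) = ((2:ℕ):ℝ) by norm_num, ENNReal.rpow_natCast, sq]
          rw [h2, mul_assoc]

/-- `P(Y)` in the transferred coordinates (at a fixed time). -/
def Pop (v ξ u : ℝ → ℝ) (Y : ℝ) : ℝ :=
  (1 / 2) * ∫ Y' : ℝ,
    Real.exp (-|∫ s in Y..Y', Real.cos (v s / 2) ^ 2 * ξ s|)
      * (((u Y') ^ 2 * Real.cos (v Y' / 2) ^ 2
          + (1 / 2) * Real.sin (v Y' / 2) ^ 2) * ξ Y')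

/-- `P_x(Y)` in the transferred coordinates (at a fixed time). -/
def Pxop (v ξ u : ℝ → ℝ) (Y : ℝ) : ℝ :=
  (1 / 2) * ((∫ Y' in Set.Ioi Y,
      Real.exp (-|∫ s in Y..Y', Real.cos (v s / 2) ^ 2 * ξ s|)
        * (((u Y') ^ 2 * Real.cos (v Y' / 2) ^ 2
            + (1 / 2) * Real.sin (v Y' / 2) ^ 2) * ξ Y'))
    - ∫ Y' in Set.Iio Y,
      Real.exp (-|∫ s in Y..Y', Real.cos (v s / 2) ^ 2 * ξ s|)
        * (((u Y') ^ 2 * Real.cos (v Y' / 2) ^ 2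
            + (1 / 2) * Real.sin (v Y' / 2) ^ 2) * ξ Y'))

/-- `L²` bounds for `P` and `P_x`: with `‖g‖_{L¹} = B² + 4/C⁻`,
`‖P‖_{L²} ≤ (C⁺/2) ‖g‖_{L¹} (‖u‖_{L^∞} ‖u‖_{L²} + (1/4) ‖v‖_{L²})` and
`‖P_x‖_{L²} ≤ C⁺ ‖g‖_{L¹} (‖u‖_{L^∞} ‖u‖_{L²} + (1/4) ‖v‖_{L²})`. -/
theorem stmt_12 (B Cm Cp : ℝ) (hB : 0 < B) (hCm : 0 < Cm) (hCp : 0 < Cp) (hle : Cm ≤ Cp)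
    (v ξ u : ℝ → ℝ)
    (hv : MemLp v 2 (volume : Measure ℝ))
    (hvB : eLpNorm v 2 (volume : Measure ℝ) ≤ ENNReal.ofReal B)
    (hξm : Measurable ξ) (hξ : ∀ᵐ Y : ℝ, ξ Y ∈ Set.Icc Cm Cp)
    (hu2 : MemLp u 2 (volume : Measure ℝ)) (huI : MemLp u ⊤ (volume : Measure ℝ)) :
    eLpNorm (Pop v ξ u) 2 (volume : Measure ℝ)
        ≤ ENNReal.ofReal ((Cp / 2) * (B ^ 2 + 4 / Cm))
            * (eLpNorm u ⊤ (volume : Measure ℝ) * eLpNorm u 2 (volume : Measure ℝ)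
              + ENNReal.ofReal (1 / 4) * eLpNorm v 2 (volume : Measure ℝ)) ∧
    eLpNorm (Pxop v ξ u) 2 (volume : Measure ℝ)
        ≤ ENNReal.ofReal (Cp * (B ^ 2 + 4 / Cm))
            * (eLpNorm u ⊤ (volume : Measure ℝ) * eLpNorm u 2 (volume : Measure ℝ)
              + ENNReal.ofReal (1 / 4) * eLpNorm v 2 (volume : Measure ℝ)) := by
  have hvm : AEStronglyMeasurable v (volume : Measure ℝ) := hv.aestronglyMeasurable
  have hum : AEMeasurable u (volume : Measure ℝ) := hu2.aestronglyMeasurable.aemeasurable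
  have hvam : AEMeasurable v (volume : Measure ℝ) := hvm.aemeasurable
  have hv2int : Integrable (fun s => (v s) ^ 2) (volume : Measure ℝ) := hv.integrable_sq
  -- ∫ v² ≤ B²
  have hvBsq : ∫ s : ℝ, (v s) ^ 2 ≤ B ^ 2 := by
    have h1 : ENNReal.ofReal (∫ s : ℝ, (v s) ^ 2) = ∫⁻ s : ℝ, ENNReal.ofReal ((v s) ^ 2) :=
      ofReal_integral_eq_lintegral_ofReal hv2int
        (Filter.Eventually.of_forall fun s => sq_nonneg _)
    have h2 : ∀ s : ℝ, ENNReal.ofReal ((v s) ^ 2) = (‖v s‖₊ : ℝ≥0∞) ^ (2 : ℝ) := by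
      intro s
      rw [show ((2:ℝ)) = ((2:ℕ):ℝ) by norm_num, ENNReal.rpow_natCast,
        show (v s) ^ 2 = |v s| ^ 2 from (sq_abs _).symm, ENNReal.ofReal_pow (abs_nonneg _),
        ← enorm_eq_nnnorm, Real.enorm_eq_ofReal_abs]
    have h4 := hvB
    rw [eLpNorm_eq_lintegral_rpow_enorm_toReal (by norm_num) (by norm_num)] at h4
    simp only [ENNReal.toReal_ofNat] at h4
    have h6 := ENNReal.rpow_le_rpow h4 (by norm_num : (0:ℝ) ≤ 2)
    rw [← ENNReal.rpow_mul, show (1/2:ℝ) * 2 = 1 by norm_num, ENNReal.rpow_one] at h6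
    have h7 : ENNReal.ofReal (∫ s : ℝ, (v s) ^ 2) ≤ ENNReal.ofReal (B ^ 2) := by
      rw [h1]
      calc ∫⁻ s : ℝ, ENNReal.ofReal ((v s) ^ 2)
          = ∫⁻ s : ℝ, (‖v s‖₊ : ℝ≥0∞) ^ (2 : ℝ) := lintegral_congr h2
        _ ≤ ENNReal.ofReal B ^ (2:ℝ) := h6
        _ = ENNReal.ofReal (B ^ 2) := by
            rw [show ((2:ℝ)) = ((2:ℕ):ℝ) by norm_num, ENNReal.rpow_natCast,
              ← ENNReal.ofReal_pow hB.le]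
    exact (ENNReal.ofReal_le_ofReal_iff (by positivity)).mp h7
  -- essential sup bound for u
  set Mu : ℝ≥0∞ := eLpNorm u ⊤ (volume : Measure ℝ) with hMudef
  have hMufin : Mu ≠ ⊤ := huI.2.ne
  set M : ℝ := Mu.toReal with hMdef
  have hM0 : 0 ≤ M := ENNReal.toReal_nonneg
  have huM : ∀ᵐ y : ℝ, |u y| ≤ M := by
    have h1 : ∀ᵐ y : ℝ, (‖u y‖₊ : ℝ≥0∞) ≤ eLpNormEssSup u (volume : Measure ℝ) :=
      enorm_ae_le_eLpNormEssSup u volume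
    filter_upwards [h1] with y hy
    have h2 : (‖u y‖₊ : ℝ≥0∞) ≤ Mu := by rw [hMudef, eLpNorm_exponent_top]; exact hy
    have h3 := ENNReal.toReal_mono hMufin h2
    rwa [ENNReal.coe_toReal, coe_nnnorm, Real.norm_eq_abs] at h3
  -- the dominating kernel and profile
  set gt : ℝ → ℝ≥0∞ :=
    fun z => ENNReal.ofReal (min 1 (Real.exp ((Cm / 2) * (B ^ 2 / 2 - |z|)))) with hgtdef
  have hgR0 : ∀ z : ℝ, (0:ℝ) ≤ min 1 (Real.exp ((Cm / 2) * (B ^ 2 / 2 - |z|))) := fun z =>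
    le_min zero_le_one (Real.exp_pos _).le
  have hgm : Measurable gt := by
    have hgc : Continuous fun z : ℝ => min 1 (Real.exp ((Cm / 2) * (B ^ 2 / 2 - |z|))) :=
      continuous_const.min (Real.continuous_exp.comp
        (continuous_const.mul (continuous_const.sub continuous_abs)))
    exact hgc.measurable.ennreal_ofReal
  set hfun : ℝ → ℝ := fun y => Cp * (M * |u y| + |v y| / 4) with hfundef
  have hfun0 : ∀ y, 0 ≤ hfun y := fun y =>
    mul_nonneg hCp.le (add_nonneg (mul_nonneg hM0 (abs_nonneg _)) (by positivity))
  have hfam : AEMeasurable hfun (volume : Measure ℝ) := by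
    exact (((continuous_abs.measurable.comp_aemeasurable hum).const_mul M).add
      ((continuous_abs.measurable.comp_aemeasurable hvam).div_const 4)).const_mul Cp
  set ht : ℝ → ℝ≥0∞ := fun y => ENNReal.ofReal (hfun y) with htdef
  have htm : AEMeasurable ht (volume : Measure ℝ) := hfam.ennreal_ofReal
  -- pointwise bound for the integrand
  have hFbound : ∀ᵐ Y' : ℝ, ∀ Y : ℝ,
      (‖Real.exp (-|∫ s in Y..Y', Real.cos (v s / 2) ^ 2 * ξ s|)
        * (((u Y') ^ 2 * Real.cos (v Y' / 2) ^ 2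
            + (1 / 2) * Real.sin (v Y' / 2) ^ 2) * ξ Y')‖₊ : ℝ≥0∞)
        ≤ gt (Y - Y') * ht Y' := by
    filter_upwards [huM, hξ] with Y' h1 h2
    intro Y
    rw [← enorm_eq_nnnorm, Real.enorm_eq_ofReal_abs, hgtdef, htdef, ← ENNReal.ofReal_mul (hgR0 _)]
    apply ENNReal.ofReal_le_ofReal
    have hker := aux_kernel B Cm Cp hCm v ξ hvm hξm hξ hv2int hvBsq Y Y'
    set A : ℝ := (u Y') ^ 2 * Real.cos (v Y' / 2) ^ 2 + (1 / 2) * Real.sin (v Y' / 2) ^ 2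
      with hAdef
    have hA0 : 0 ≤ A := by
      rw [hAdef]; positivity
    have hAle : A ≤ M * |u Y'| + |v Y'| / 4 := by
      have t1 : (u Y') ^ 2 * Real.cos (v Y' / 2) ^ 2 ≤ M * |u Y'| := by
        have e1 : (u Y') ^ 2 * Real.cos (v Y' / 2) ^ 2 ≤ (u Y') ^ 2 := by
          nlinarith [Real.cos_sq_le_one (v Y' / 2), sq_nonneg (u Y')]
        have e2 : (u Y') ^ 2 = |u Y'| * |u Y'| := by rw [← sq_abs]; ring
        nlinarith [abs_nonneg (u Y')]
      have t2 : (1 / 2) * Real.sin (v Y' / 2) ^ 2 ≤ |v Y'| / 4 := by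
        have hs1 : |Real.sin (v Y' / 2)| ≤ 1 := Real.abs_sin_le_one _
        have hs2 : |Real.sin (v Y' / 2)| ≤ |v Y' / 2| := Real.abs_sin_le_abs
        have hs3 : Real.sin (v Y' / 2) ^ 2 ≤ |v Y' / 2| := by
          rw [← sq_abs, sq]
          calc |Real.sin (v Y' / 2)| * |Real.sin (v Y' / 2)|
              ≤ 1 * |v Y' / 2| := mul_le_mul hs1 hs2 (abs_nonneg _) zero_le_one
            _ = |v Y' / 2| := one_mul _
        have hs4 : |v Y' / 2| = |v Y'| / 2 := by
          rw [abs_div]; norm_num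
        rw [hs4] at hs3
        linarith
      linarith
    have hstuff : |A * ξ Y'| ≤ hfun Y' := by
      rw [abs_mul, abs_of_nonneg hA0, abs_of_nonneg (le_trans hCm.le h2.1)]
      calc A * ξ Y' ≤ (M * |u Y'| + |v Y'| / 4) * Cp :=
            mul_le_mul hAle h2.2 (le_trans hCm.le h2.1)
              (add_nonneg (mul_nonneg hM0 (abs_nonneg _)) (by positivity))
        _ = hfun Y' := by simp only [hfundef]; ring
    rw [abs_mul, abs_of_pos (Real.exp_pos _)]
    exact mul_le_mul hker hstuff (abs_nonneg _) (hgR0 _)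
  -- the dominating convolution
  set T : ℝ → ℝ≥0∞ := fun Y => ∫⁻ Y' : ℝ, gt (Y - Y') * ht Y' with hTdef
  have hPopY : ∀ Y : ℝ, (‖Pop v ξ u Y‖₊ : ℝ≥0∞) ≤ ENNReal.ofReal (1 / 2) * T Y := by
    intro Y
    simp only [Pop]
    rw [← enorm_eq_nnnorm, Real.enorm_eq_ofReal_abs, abs_mul, abs_of_nonneg (by norm_num : (0:ℝ) ≤ 1/2),
      ENNReal.ofReal_mul (by norm_num : (0:ℝ) ≤ 1/2)]
    refine mul_le_mul_right ?_ _
    calc ENNReal.ofReal |∫ Y' : ℝ, Real.exp (-|∫ s in Y..Y', Real.cos (v s / 2) ^ 2 * ξ s|)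
          * (((u Y') ^ 2 * Real.cos (v Y' / 2) ^ 2
              + (1 / 2) * Real.sin (v Y' / 2) ^ 2) * ξ Y')|
        = (‖∫ Y' : ℝ, Real.exp (-|∫ s in Y..Y', Real.cos (v s / 2) ^ 2 * ξ s|)
          * (((u Y') ^ 2 * Real.cos (v Y' / 2) ^ 2
              + (1 / 2) * Real.sin (v Y' / 2) ^ 2) * ξ Y')‖₊ : ℝ≥0∞) :=
          (Real.enorm_eq_ofReal_abs _).symm
      _ ≤ ∫⁻ Y' : ℝ, (‖Real.exp (-|∫ s in Y..Y', Real.cos (v s / 2) ^ 2 * ξ s|)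
          * (((u Y') ^ 2 * Real.cos (v Y' / 2) ^ 2
              + (1 / 2) * Real.sin (v Y' / 2) ^ 2) * ξ Y')‖₊ : ℝ≥0∞) :=
          enorm_integral_le_lintegral_enorm _
      _ ≤ T Y := by
          refine lintegral_mono_ae ?_
          filter_upwards [hFbound] with Y' hb
          exact hb Y
  have hPxY : ∀ Y : ℝ, (‖Pxop v ξ u Y‖₊ : ℝ≥0∞) ≤ T Y := by
    intro Y
    have hset : ∀ S : Set ℝ, ENNReal.ofReal |∫ Y' in S,
        Real.exp (-|∫ s in Y..Y', Real.cos (v s / 2) ^ 2 * ξ s|)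
          * (((u Y') ^ 2 * Real.cos (v Y' / 2) ^ 2
              + (1 / 2) * Real.sin (v Y' / 2) ^ 2) * ξ Y')| ≤ T Y := by
      intro S
      calc ENNReal.ofReal |∫ Y' in S,
            Real.exp (-|∫ s in Y..Y', Real.cos (v s / 2) ^ 2 * ξ s|)
              * (((u Y') ^ 2 * Real.cos (v Y' / 2) ^ 2
                  + (1 / 2) * Real.sin (v Y' / 2) ^ 2) * ξ Y')|
          = (‖∫ Y' in S,
            Real.exp (-|∫ s in Y..Y', Real.cos (v s / 2) ^ 2 * ξ s|)
              * (((u Y') ^ 2 * Real.cos (v Y' / 2) ^ 2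
                  + (1 / 2) * Real.sin (v Y' / 2) ^ 2) * ξ Y')‖₊ : ℝ≥0∞) :=
            (Real.enorm_eq_ofReal_abs _).symm
        _ ≤ ∫⁻ Y' in S, (‖Real.exp (-|∫ s in Y..Y', Real.cos (v s / 2) ^ 2 * ξ s|)
              * (((u Y') ^ 2 * Real.cos (v Y' / 2) ^ 2
                  + (1 / 2) * Real.sin (v Y' / 2) ^ 2) * ξ Y')‖₊ : ℝ≥0∞) :=
            enorm_integral_le_lintegral_enorm _
        _ ≤ ∫⁻ Y' in S, gt (Y - Y') * ht Y' := by
            refine lintegral_mono_ae ?_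
            filter_upwards [ae_restrict_of_ae hFbound] with Y' hb
            exact hb Y
        _ ≤ T Y := lintegral_mono' Measure.restrict_le_self le_rfl
    simp only [Pxop]
    rw [← enorm_eq_nnnorm, Real.enorm_eq_ofReal_abs, abs_mul, abs_of_nonneg (by norm_num : (0:ℝ) ≤ 1/2),
      ENNReal.ofReal_mul (by norm_num : (0:ℝ) ≤ 1/2)]
    have habs : ENNReal.ofReal |(∫ Y' in Set.Ioi Y,
        Real.exp (-|∫ s in Y..Y', Real.cos (v s / 2) ^ 2 * ξ s|)
          * (((u Y') ^ 2 * Real.cos (v Y' / 2) ^ 2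
              + (1 / 2) * Real.sin (v Y' / 2) ^ 2) * ξ Y'))
      - ∫ Y' in Set.Iio Y,
        Real.exp (-|∫ s in Y..Y', Real.cos (v s / 2) ^ 2 * ξ s|)
          * (((u Y') ^ 2 * Real.cos (v Y' / 2) ^ 2
              + (1 / 2) * Real.sin (v Y' / 2) ^ 2) * ξ Y')| ≤ T Y + T Y := by
      refine le_trans (ENNReal.ofReal_le_ofReal (abs_sub _ _)) ?_
      rw [ENNReal.ofReal_add (abs_nonneg _) (abs_nonneg _)]
      exact add_le_add (hset _) (hset _)
    refine le_trans (mul_le_mul_right habs _) ?_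
    rw [← two_mul, ← mul_assoc, show ((2:ℝ≥0∞)) = ENNReal.ofReal 2 by simp,
      ← ENNReal.ofReal_mul (by norm_num : (0:ℝ) ≤ 1/2)]
    norm_num
  -- Young / convolution bound
  have hyoung := aux_young gt ht hgm htm
  set G : ℝ≥0∞ := ∫⁻ z : ℝ, gt z with hGdef
  set H : ℝ≥0∞ := ∫⁻ y : ℝ, (ht y) ^ (2:ℝ) with hHdef
  have hBCm : (0:ℝ) ≤ B ^ 2 + 4 / Cm :=
    add_nonneg (sq_nonneg B) (div_nonneg (by norm_num) hCm.le)
  have hGle : G ≤ ENNReal.ofReal (B ^ 2 + 4 / Cm) := by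
    have h1 := aux_g_lintegral (Cm / 2) (B ^ 2 / 2) (by positivity) (by positivity)
    have h2 : 2 * (B ^ 2 / 2) + 2 / (Cm / 2) = B ^ 2 + 4 / Cm := by
      field_simp
      ring
    rw [hGdef, hgtdef]
    refine h1.trans (le_of_eq ?_)
    rw [h2]
  have hHeq : H ^ (1/2 : ℝ) = eLpNorm hfun 2 (volume : Measure ℝ) := by
    rw [eLpNorm_eq_lintegral_rpow_enorm_toReal (by norm_num) (by norm_num)]
    simp only [ENNReal.toReal_ofNat]
    rw [hHdef, htdef]
    congr 1
    refine lintegral_congr fun y => ?_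
    rw [Real.enorm_eq_ofReal (hfun0 y)]
  have hL2hfun : eLpNorm hfun 2 (volume : Measure ℝ)
      ≤ ENNReal.ofReal Cp * (ENNReal.ofReal M * eLpNorm u 2 (volume : Measure ℝ)
          + ENNReal.ofReal (1/4) * eLpNorm v 2 (volume : Measure ℝ)) := by
    set f1 : ℝ → ℝ := fun y => M * ‖u y‖ with hf1
    set f2 : ℝ → ℝ := fun y => (4:ℝ)⁻¹ * ‖v y‖ with hf2
    have hfeq : hfun = Cp • (f1 + f2) := by
      funext y
      simp only [hfundef, hf1, hf2, Pi.smul_apply, Pi.add_apply, smul_eq_mul,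
        Real.norm_eq_abs]
      ring
    have hm1 : AEStronglyMeasurable f1 (volume : Measure ℝ) :=
      hu2.aestronglyMeasurable.norm.const_mul M
    have hm2 : AEStronglyMeasurable f2 (volume : Measure ℝ) :=
      hv.aestronglyMeasurable.norm.const_mul _
    calc eLpNorm hfun 2 (volume : Measure ℝ)
        = eLpNorm (Cp • (f1 + f2)) 2 (volume : Measure ℝ) := by rw [hfeq]
      _ ≤ ‖Cp‖₊ • eLpNorm (f1 + f2) 2 (volume : Measure ℝ) := eLpNorm_const_smul_le
      _ = ENNReal.ofReal Cp * eLpNorm (f1 + f2) 2 (volume : Measure ℝ) := by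
          rw [ENNReal.smul_def, smul_eq_mul, ← enorm_eq_nnnorm, Real.enorm_eq_ofReal hCp.le]
      _ ≤ ENNReal.ofReal Cp * (eLpNorm f1 2 (volume : Measure ℝ)
            + eLpNorm f2 2 (volume : Measure ℝ)) :=
          mul_le_mul_right (eLpNorm_add_le hm1 hm2 (by norm_num)) _
      _ ≤ _ := by
          refine mul_le_mul_right (add_le_add ?_ ?_) _
          · have he : f1 = M • (fun y => ‖u y‖) := by
              funext y; simp [hf1, smul_eq_mul]
            rw [he]
            refine le_trans eLpNorm_const_smul_le (le_of_eq ?_)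
            rw [Real.enorm_eq_ofReal hM0, eLpNorm_norm]
          · have he : f2 = (4:ℝ)⁻¹ • (fun y => ‖v y‖) := by
              funext y; simp [hf2, smul_eq_mul]
            rw [he]
            refine le_trans eLpNorm_const_smul_le (le_of_eq ?_)
            rw [
              Real.enorm_eq_ofReal (by norm_num : (0:ℝ) ≤ 4⁻¹), eLpNorm_norm]
            norm_num
  have hEPop : eLpNorm (Pop v ξ u) 2 (volume : Measure ℝ)
      ≤ ENNReal.ofReal (1/2) * (G * H ^ (1/2:ℝ)) := by
    rw [eLpNorm_eq_lintegral_rpow_enorm_toReal (by norm_num) (by norm_num)]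
    simp only [ENNReal.toReal_ofNat]
    have hmono : ∫⁻ Y : ℝ, (‖Pop v ξ u Y‖₊ : ℝ≥0∞) ^ (2:ℝ)
        ≤ ENNReal.ofReal (1/2) ^ (2:ℝ) * (G ^ (2:ℝ) * H) := by
      calc ∫⁻ Y : ℝ, (‖Pop v ξ u Y‖₊ : ℝ≥0∞) ^ (2:ℝ)
          ≤ ∫⁻ Y : ℝ, (ENNReal.ofReal (1/2) * T Y) ^ (2:ℝ) :=
            lintegral_mono fun Y => ENNReal.rpow_le_rpow (hPopY Y) (by norm_num)
        _ = ∫⁻ Y : ℝ, ENNReal.ofReal (1/2) ^ (2:ℝ) * (T Y) ^ (2:ℝ) := by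
            refine lintegral_congr fun Y => ?_
            rw [ENNReal.mul_rpow_of_nonneg _ _ (by norm_num : (0:ℝ) ≤ 2)]
        _ = ENNReal.ofReal (1/2) ^ (2:ℝ) * ∫⁻ Y : ℝ, (T Y) ^ (2:ℝ) :=
            lintegral_const_mul' _ _
              (ENNReal.rpow_ne_top_of_nonneg (by norm_num) ENNReal.ofReal_ne_top)
        _ ≤ ENNReal.ofReal (1/2) ^ (2:ℝ) * (G ^ (2:ℝ) * H) := mul_le_mul_right hyoung _
    calc (∫⁻ Y : ℝ, (‖Pop v ξ u Y‖₊ : ℝ≥0∞) ^ (2:ℝ)) ^ (1/2 : ℝ)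
        ≤ (ENNReal.ofReal (1/2) ^ (2:ℝ) * (G ^ (2:ℝ) * H)) ^ (1/2:ℝ) :=
          ENNReal.rpow_le_rpow hmono (by norm_num)
      _ = ENNReal.ofReal (1/2) * (G * H ^ (1/2:ℝ)) := by
          rw [ENNReal.mul_rpow_of_nonneg _ _ (by norm_num : (0:ℝ) ≤ 1/2),
            ENNReal.mul_rpow_of_nonneg _ _ (by norm_num : (0:ℝ) ≤ 1/2),
            ← ENNReal.rpow_mul, ← ENNReal.rpow_mul]
          norm_num [ENNReal.rpow_one]
  have hEPx : eLpNorm (Pxop v ξ u) 2 (volume : Measure ℝ) ≤ G * H ^ (1/2:ℝ) := by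
    rw [eLpNorm_eq_lintegral_rpow_enorm_toReal (by norm_num) (by norm_num)]
    simp only [ENNReal.toReal_ofNat]
    have hmono : ∫⁻ Y : ℝ, (‖Pxop v ξ u Y‖₊ : ℝ≥0∞) ^ (2:ℝ) ≤ G ^ (2:ℝ) * H := by
      calc ∫⁻ Y : ℝ, (‖Pxop v ξ u Y‖₊ : ℝ≥0∞) ^ (2:ℝ)
          ≤ ∫⁻ Y : ℝ, (T Y) ^ (2:ℝ) :=
            lintegral_mono fun Y => ENNReal.rpow_le_rpow (hPxY Y) (by norm_num)
        _ ≤ G ^ (2:ℝ) * H := hyoung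
    calc (∫⁻ Y : ℝ, (‖Pxop v ξ u Y‖₊ : ℝ≥0∞) ^ (2:ℝ)) ^ (1/2 : ℝ)
        ≤ (G ^ (2:ℝ) * H) ^ (1/2:ℝ) := ENNReal.rpow_le_rpow hmono (by norm_num)
      _ = G * H ^ (1/2:ℝ) := by
          rw [ENNReal.mul_rpow_of_nonneg _ _ (by norm_num : (0:ℝ) ≤ 1/2),
            ← ENNReal.rpow_mul]
          norm_num [ENNReal.rpow_one]
  set X : ℝ≥0∞ := Mu * eLpNorm u 2 (volume : Measure ℝ)
      + ENNReal.ofReal (1/4) * eLpNorm v 2 (volume : Measure ℝ) with hXdef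
  have hHX : H ^ (1/2:ℝ) ≤ ENNReal.ofReal Cp * X := by
    rw [hHeq]
    refine hL2hfun.trans (mul_le_mul_right ?_ _)
    rw [hXdef]
    refine add_le_add (mul_le_mul_left ?_ _) le_rfl
    rw [hMdef]
    exact ENNReal.ofReal_toReal_le
  constructor
  · refine hEPop.trans ?_
    calc ENNReal.ofReal (1/2) * (G * H ^ (1/2:ℝ))
        ≤ ENNReal.ofReal (1/2) * (ENNReal.ofReal (B ^ 2 + 4 / Cm)
            * (ENNReal.ofReal Cp * X)) := mul_le_mul_right (mul_le_mul' hGle hHX) _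
      _ = ENNReal.ofReal ((Cp / 2) * (B ^ 2 + 4 / Cm)) * X := by
          rw [← mul_assoc, ← mul_assoc, ← ENNReal.ofReal_mul (by norm_num : (0:ℝ) ≤ 1/2),
            ← ENNReal.ofReal_mul (mul_nonneg (by norm_num) hBCm)]
          congr 2
          ring
  · refine hEPx.trans ?_
    calc G * H ^ (1/2:ℝ)
        ≤ ENNReal.ofReal (B ^ 2 + 4 / Cm) * (ENNReal.ofReal Cp * X) :=
          mul_le_mul' hGle hHX
      _ = ENNReal.ofReal (Cp * (B ^ 2 + 4 / Cm)) * X := by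
          rw [← mul_assoc, ← ENNReal.ofReal_mul hBCm]
          congr 2
          ring
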